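/- Let f : ℝ^N → ℝ be nonnegative measurable with (1+|ξ|²)f ∈ L¹, n = ∫ f dξ > 0, n·ū = ∫ ξ f dξ, N·n·T = ∫|ξ−ū|² f dξ > 0. Then for any q > 1 there is a constant C_q such that n·|ū|^{N+q} / [ (T + |ū|²)·T ]^{N/2} ≤ C_q · sup_ξ |ξ|^q f(ξ). -/

import Mathlib

open MeasureTheory Real

set_option maxHeartbeats 1000000 in
/-- Estimate (iii.1): n |ubar|^{N+q} / [(T + |ubar|²) T]^{N/2} ≤ C_q N_q(f) for q > 1. -/
theorem velocity_weighted_bound (N : ℕ) (hN : 1 ≤ N) (q : ℝ) (hq : 1 < q) :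
    ∃ C : ℝ, 0 < C ∧
      ∀ (f : EuclideanSpace ℝ (Fin N) → ℝ) (n T : ℝ) (ubar : EuclideanSpace ℝ (Fin N)),
        Measurable f → (∀ ξ, 0 ≤ f ξ) →
        Integrable (fun ξ => (1 + ‖ξ‖ ^ 2) * f ξ) →
        BddAbove (Set.range fun ξ => ‖ξ‖ ^ q * f ξ) →
        n = (∫ ξ, f ξ) →
        n • ubar = (∫ ξ, f ξ • ξ) →
        (N : ℝ) * n * T = (∫ ξ, ‖ξ - ubar‖ ^ 2 * f ξ) →
        0 < n → 0 < T →
        n * ‖ubar‖ ^ ((N : ℝ) + q) / ((T + ‖ubar‖ ^ 2) * T) ^ ((N : ℝ) / 2)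
          ≤ C * ⨆ ξ, ‖ξ‖ ^ q * f ξ := by
  have hq0 : (0:ℝ) < q := by linarith
  have hN0 : (0:ℝ) < N := by exact_mod_cast hN
  set ω : ℝ := (volume (Metric.ball (0 : EuclideanSpace ℝ (Fin N)) 1)).toReal with hωdef
  have hω : 0 < ω :=
    ENNReal.toReal_pos (Metric.measure_ball_pos _ _ one_pos).ne' measure_ball_lt_top.ne
  set K₁ : ℝ := 2 ^ (q+1) * (2*(N:ℝ)) ^ ((N:ℝ)/2) * ω with hK₁def
  set K₂ : ℝ := 2 * 4 ^ (q-1) * (72*(N:ℝ)) ^ ((N:ℝ)) * ω with hK₂def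
  have hK₁ : 0 < K₁ :=
    mul_pos (mul_pos (Real.rpow_pos_of_pos two_pos _)
      (Real.rpow_pos_of_pos (by positivity) _)) hω
  have hK₂ : 0 < K₂ :=
    mul_pos (mul_pos (mul_pos two_pos (Real.rpow_pos_of_pos (by norm_num) _))
      (Real.rpow_pos_of_pos (by positivity) _)) hω
  refine ⟨K₁ + K₂, by linarith, ?_⟩
  intro f n T ubar hmf hf0 hI hbdd hn hu hT hn0 hT0
  set M : ℝ := ⨆ ξ, ‖ξ‖ ^ q * f ξ with hMdef
  have hM : ∀ ξ, ‖ξ‖ ^ q * f ξ ≤ M := fun ξ => le_ciSup hbdd ξ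
  have hM0 : 0 ≤ M :=
    le_trans (mul_nonneg (Real.rpow_nonneg (norm_nonneg _) q) (hf0 0)) (hM 0)
  set s : ℝ := ‖ubar‖ with hsdef
  have hs0 : 0 ≤ s := norm_nonneg _
  have hfM : ∀ ξ : EuclideanSpace ℝ (Fin N), 0 < ‖ξ‖ → f ξ ≤ M / ‖ξ‖ ^ q := by
    intro ξ hξ
    rw [le_div_iff₀ (Real.rpow_pos_of_pos hξ q), mul_comm]
    exact hM ξ
  -- integrabilities
  have hfint : Integrable f := by
    refine hI.mono hmf.aestronglyMeasurable (ae_of_all _ fun ξ => ?_)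
    rw [Real.norm_eq_abs, Real.norm_eq_abs, abs_of_nonneg (hf0 ξ),
      abs_of_nonneg (mul_nonneg (by positivity) (hf0 ξ))]
    nlinarith [hf0 ξ, sq_nonneg ‖ξ‖]
  have h1 : Integrable (fun ξ : EuclideanSpace ℝ (Fin N) => ‖ξ‖ * f ξ) := by
    refine hI.mono (measurable_norm.mul hmf).aestronglyMeasurable (ae_of_all _ fun ξ => ?_)
    rw [Real.norm_eq_abs, Real.norm_eq_abs, abs_of_nonneg (mul_nonneg (norm_nonneg _) (hf0 ξ)),
      abs_of_nonneg (mul_nonneg (by positivity) (hf0 ξ))]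
    have h' : ‖ξ‖ ≤ 1 + ‖ξ‖^2 := by nlinarith [sq_nonneg (‖ξ‖ - 1)]
    exact mul_le_mul_of_nonneg_right h' (hf0 ξ)
  have h2 : Integrable (fun ξ : EuclideanSpace ℝ (Fin N) => ‖ξ‖^2 * f ξ) := by
    refine hI.mono ((measurable_norm.pow_const 2).mul hmf).aestronglyMeasurable
      (ae_of_all _ fun ξ => ?_)
    rw [Real.norm_eq_abs, Real.norm_eq_abs,
      abs_of_nonneg (mul_nonneg (by positivity) (hf0 ξ)),
      abs_of_nonneg (mul_nonneg (by positivity) (hf0 ξ))]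
    nlinarith [hf0 ξ]
  have h3 : Integrable (fun ξ : EuclideanSpace ℝ (Fin N) => ‖ξ - ubar‖^2 * f ξ) := by
    have hint : Integrable (fun ξ : EuclideanSpace ℝ (Fin N) =>
        (2 + 2*s^2) * ((1 + ‖ξ‖^2) * f ξ)) := hI.const_mul _
    refine hint.mono ?_ (ae_of_all _ fun ξ => ?_)
    · exact (((measurable_id.sub_const ubar).norm.pow_const 2).mul hmf).aestronglyMeasurable
    · rw [Real.norm_eq_abs, Real.norm_eq_abs,
        abs_of_nonneg (mul_nonneg (by positivity) (hf0 ξ)),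
        abs_of_nonneg (mul_nonneg (by positivity) (mul_nonneg (by positivity) (hf0 ξ)))]
      have hξu : ‖ξ - ubar‖ ≤ ‖ξ‖ + s := norm_sub_le ξ ubar
      have h4 : ‖ξ - ubar‖^2 ≤ (‖ξ‖ + s)^2 := by
        have := norm_nonneg (ξ - ubar); nlinarith
      have h5 : (‖ξ‖ + s)^2 ≤ (2 + 2*s^2) * (1 + ‖ξ‖^2) := by
        nlinarith [sq_nonneg (‖ξ‖ - s), sq_nonneg (‖ξ‖*s)]
      calc ‖ξ - ubar‖^2 * f ξ ≤ ((2 + 2*s^2) * (1 + ‖ξ‖^2)) * f ξ :=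
            mul_le_mul_of_nonneg_right (h4.trans h5) (hf0 ξ)
        _ = (2 + 2*s^2) * ((1 + ‖ξ‖^2) * f ξ) := by ring
  have h4v : Integrable (fun ξ : EuclideanSpace ℝ (Fin N) => f ξ • ξ) := by
    refine h1.mono (hmf.smul measurable_id).aestronglyMeasurable (ae_of_all _ fun ξ => ?_)
    rw [norm_smul, Real.norm_eq_abs, abs_of_nonneg (hf0 ξ), Real.norm_eq_abs,
      abs_of_nonneg (mul_nonneg (norm_nonneg _) (hf0 ξ)), mul_comm]
  -- mean bound
  have hns : n * s ≤ ∫ ξ, ‖ξ‖ * f ξ := by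
    have e1 : n * s = ‖n • ubar‖ := by
      rw [norm_smul, Real.norm_eq_abs, abs_of_pos hn0]
    rw [e1, hu]
    refine le_trans (norm_integral_le_integral_norm _) (le_of_eq ?_)
    refine integral_congr_ae (ae_of_all _ fun ξ => ?_)
    simp only [norm_smul, Real.norm_eq_abs]
    rw [abs_of_nonneg (hf0 ξ), mul_comm]
  -- second moment bound
  have hE : (∫ ξ, ‖ξ‖^2 * f ξ) ≤ 2*((N:ℝ)*n*T) + 2*s^2*n := by
    have pt : ∀ ξ : EuclideanSpace ℝ (Fin N),
        ‖ξ‖^2 * f ξ ≤ 2*(‖ξ - ubar‖^2 * f ξ) + (2*s^2) * f ξ := by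
      intro ξ
      have hξu : ‖ξ‖ ≤ ‖ξ - ubar‖ + s := by
        calc ‖ξ‖ = ‖(ξ - ubar) + ubar‖ := by rw [sub_add_cancel]
          _ ≤ ‖ξ - ubar‖ + s := norm_add_le _ _
      have h4 : ‖ξ‖^2 ≤ 2*‖ξ - ubar‖^2 + 2*s^2 := by
        nlinarith [norm_nonneg ξ, sq_nonneg (‖ξ - ubar‖ - s)]
      nlinarith [mul_le_mul_of_nonneg_right h4 (hf0 ξ)]
    calc (∫ ξ, ‖ξ‖^2 * f ξ)
        ≤ ∫ ξ, (2*(‖ξ - ubar‖^2 * f ξ) + (2*s^2) * f ξ) :=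
          integral_mono h2 ((h3.const_mul 2).add (hfint.const_mul (2*s^2))) pt
      _ = 2*((N:ℝ)*n*T) + 2*s^2*n := by
          rw [integral_add (h3.const_mul 2) (hfint.const_mul (2*s^2)),
            integral_const_mul, integral_const_mul, ← hT, ← hn]
  -- volume formula
  have hvol : ∀ (x : EuclideanSpace ℝ (Fin N)) (r : ℝ), 0 ≤ r →
      (volume (Metric.closedBall x r)).toReal = r ^ N * ω := by
    intro x r hr
    rw [Measure.addHaar_closedBall volume x hr, finrank_euclideanSpace_fin,
      ENNReal.toReal_mul, ENNReal.toReal_ofReal (by positivity)]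
  have hden : (0:ℝ) < ((T + s^2) * T) ^ ((N:ℝ)/2) :=
    Real.rpow_pos_of_pos (by positivity) _
  rw [div_le_iff₀ hden]
  have hsqpow : ∀ x : ℝ, 0 ≤ x → (x^2 : ℝ) ^ ((N:ℝ)/2) = x ^ ((N:ℝ)) := by
    intro x hx
    rw [← Real.rpow_natCast x 2, ← Real.rpow_mul hx]
    congr 1
    push_cast
    ring
  rcases eq_or_lt_of_le hs0 with hs | hs
  · -- degenerate case ubar = 0
    rw [← hs, Real.zero_rpow (by positivity : ((N:ℝ) + q) ≠ 0), mul_zero]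
    have hX : (0:ℝ) ≤ ((T + (0:ℝ)^2) * T) ^ ((N:ℝ)/2) := Real.rpow_nonneg (by positivity) _
    exact mul_nonneg (mul_nonneg (by linarith) hM0) hX
  · rcases le_or_gt (8*(N:ℝ)*T) (s^2) with hbig | hsmall
    · -- large mean case
      set r₀ : ℝ := Real.sqrt (2*(N:ℝ)*T) with hr₀def
      have hr₀pos : 0 < r₀ := Real.sqrt_pos.2 (by positivity)
      have hr₀sq : r₀^2 = 2*(N:ℝ)*T := Real.sq_sqrt (by positivity)
      have hr₀s : 2*r₀ ≤ s := by
        by_contra hcon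
        push_neg at hcon
        nlinarith [hr₀sq, hbig, hr₀pos, hs]
      set B := Metric.closedBall ubar r₀ with hBdef
      have hBmeas : MeasurableSet B := measurableSet_closedBall
      have hcheb : (∫ ξ in Bᶜ, f ξ) ≤ n/2 := by
        have pt : ∀ ξ ∈ Bᶜ, f ξ ≤ (r₀^2)⁻¹ * (‖ξ - ubar‖^2 * f ξ) := by
          intro ξ hξ
          have hd : r₀ < ‖ξ - ubar‖ := by
            simpa [hBdef, Metric.mem_closedBall, dist_eq_norm, not_le] using hξ
          rw [inv_mul_eq_div, le_div_iff₀ (by positivity)]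
          have hsq : r₀^2 * f ξ ≤ ‖ξ - ubar‖^2 * f ξ :=
            mul_le_mul_of_nonneg_right (pow_le_pow_left₀ hr₀pos.le hd.le 2) (hf0 ξ)
          linarith
        calc (∫ ξ in Bᶜ, f ξ) ≤ ∫ ξ in Bᶜ, (r₀^2)⁻¹ * (‖ξ - ubar‖^2 * f ξ) :=
              setIntegral_mono_on hfint.integrableOn (h3.const_mul _).integrableOn hBmeas.compl pt
          _ ≤ ∫ ξ, (r₀^2)⁻¹ * (‖ξ - ubar‖^2 * f ξ) :=
              setIntegral_le_integral (h3.const_mul _)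
                (ae_of_all _ fun ξ => mul_nonneg (by positivity)
                  (mul_nonneg (by positivity) (hf0 ξ)))
          _ = n/2 := by
              rw [integral_const_mul, ← hT, hr₀sq]
              field_simp
      have hmass : n/2 ≤ ∫ ξ in B, f ξ := by
        have hac := integral_add_compl hBmeas hfint
        rw [← hn] at hac
        linarith
      have hball : (∫ ξ in B, f ξ) ≤ (M / (s/2)^q) * (r₀^N * ω) := by
        have hb : ∀ ξ ∈ B, ‖f ξ‖ ≤ M / (s/2)^q := by
          intro ξ hξ
          have hd : ‖ξ - ubar‖ ≤ r₀ := by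
            simpa [hBdef, Metric.mem_closedBall, dist_eq_norm] using hξ
          have hξlb : s/2 ≤ ‖ξ‖ := by
            have h5 := norm_sub_norm_le ubar ξ
            rw [norm_sub_rev] at h5
            have : ‖ubar‖ = s := rfl
            linarith [this ▸ h5]
          have hξpos : 0 < ‖ξ‖ := lt_of_lt_of_le (by positivity) hξlb
          rw [Real.norm_eq_abs, abs_of_nonneg (hf0 ξ)]
          refine le_trans (hfM ξ hξpos) ?_
          exact div_le_div_of_nonneg_left hM0 (Real.rpow_pos_of_pos (by positivity) q)
            (Real.rpow_le_rpow (by positivity) hξlb hq0.le)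
        have h11 := norm_setIntegral_le_of_norm_le_const (μ := volume) (s := B)
          measure_closedBall_lt_top hb
        rw [Real.norm_eq_abs, measureReal_def] at h11
        have h12 := le_trans (le_abs_self _) h11
        have h13 : (volume B).toReal = r₀^N * ω := by
          rw [hBdef]; exact hvol ubar r₀ hr₀pos.le
        rw [h13] at h12
        exact h12
      have hcomb : n ≤ 2 * (M / (s/2)^q) * (r₀^N * ω) := by linarith
      have hns_q : n * s^q ≤ 2^(q+1) * (2*(N:ℝ))^((N:ℝ)/2) * T^((N:ℝ)/2) * ω * M := by
        have e2 : M / (s/2)^q * s^q = 2^q * M := by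
          rw [Real.div_rpow hs0 (by norm_num : (0:ℝ) ≤ 2)]
          have hsq : s^q ≠ 0 := (Real.rpow_pos_of_pos hs q).ne'
          have h2q : (2:ℝ)^q ≠ 0 := (Real.rpow_pos_of_pos two_pos q).ne'
          field_simp
        have e3 : (r₀:ℝ)^N = (2*(N:ℝ))^((N:ℝ)/2) * T^((N:ℝ)/2) := by
          rw [← Real.rpow_natCast r₀ N, ← hsqpow r₀ hr₀pos.le, hr₀sq,
            Real.mul_rpow (by positivity) hT0.le]
        calc n * s^q ≤ (2 * (M / (s/2)^q) * (r₀^N * ω)) * s^q :=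
              mul_le_mul_of_nonneg_right hcomb (Real.rpow_nonneg hs0 q)
          _ = 2 * (M / (s/2)^q * s^q) * (r₀^N * ω) := by ring
          _ = 2 * (2^q * M) * (r₀^N * ω) := by rw [e2]
          _ = 2^(q+1) * (2*(N:ℝ))^((N:ℝ)/2) * T^((N:ℝ)/2) * ω * M := by
              rw [e3, Real.rpow_add_one two_ne_zero q]
              ring
      have hsP : s^((N:ℝ)) ≤ (T + s^2)^((N:ℝ)/2) := by
        rw [← hsqpow s hs0]
        exact Real.rpow_le_rpow (by positivity) (by linarith) (by positivity)
      calc n * s^((N:ℝ)+q) = (n * s^q) * s^((N:ℝ)) := by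
            rw [Real.rpow_add hs]; ring
        _ ≤ (2^(q+1) * (2*(N:ℝ))^((N:ℝ)/2) * T^((N:ℝ)/2) * ω * M) * ((T + s^2)^((N:ℝ)/2)) := by
            refine mul_le_mul hns_q hsP (Real.rpow_nonneg hs0 _) ?_
            exact mul_nonneg (mul_nonneg (mul_nonneg (mul_nonneg
              (Real.rpow_nonneg (by norm_num) _) (Real.rpow_nonneg (by positivity) _))
              (Real.rpow_nonneg hT0.le _)) hω.le) hM0
        _ = K₁ * M * ((T + s^2)^((N:ℝ)/2) * T^((N:ℝ)/2)) := by rw [hK₁def]; ring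
        _ = K₁ * M * (((T + s^2) * T)^((N:ℝ)/2)) := by
            rw [Real.mul_rpow (by positivity) hT0.le]
        _ ≤ (K₁ + K₂) * M * (((T + s^2) * T)^((N:ℝ)/2)) := by
            nlinarith [mul_nonneg hK₂.le (mul_nonneg hM0 hden.le)]
    · -- small mean case
      set ρ : ℝ := s/4 with hρdef
      have hρ0 : 0 < ρ := by positivity
      set r : ℝ := 72*(N:ℝ)*T/s with hrdef
      have hr0 : 0 < r := by positivity
      set B := Metric.closedBall (0 : EuclideanSpace ℝ (Fin N)) r with hBdef
      have hBmeas : MeasurableSet B := measurableSet_closedBall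
      have hrin : (∫ ξ in B, ‖ξ‖ * f ξ) ≤ ρ * n + (M * ρ^(1-q)) * (r^N * ω) := by
        have pt : ∀ ξ ∈ B, ‖ξ‖ * f ξ ≤ ρ * f ξ + M * ρ^(1-q) := by
          intro ξ _
          rcases le_or_gt ‖ξ‖ ρ with h | h
          · have hh := mul_le_mul_of_nonneg_right h (hf0 ξ)
            have h2' : 0 ≤ M * ρ^(1-q) := mul_nonneg hM0 (Real.rpow_nonneg hρ0.le _)
            linarith
          · have hξpos : 0 < ‖ξ‖ := hρ0.trans h
            have e1 : ‖ξ‖ * f ξ = ‖ξ‖^(1-q) * (‖ξ‖^q * f ξ) := by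
              rw [← mul_assoc, ← Real.rpow_add hξpos, sub_add_cancel, Real.rpow_one]
            have e2 : ‖ξ‖^(1-q) ≤ ρ^(1-q) :=
              Real.rpow_le_rpow_of_nonpos hρ0 h.le (by linarith)
            have hb : ‖ξ‖ * f ξ ≤ ρ^(1-q) * M := by
              rw [e1]
              exact mul_le_mul e2 (hM ξ)
                (mul_nonneg (Real.rpow_nonneg (norm_nonneg _) _) (hf0 ξ))
                (Real.rpow_nonneg hρ0.le _)
            have h3' : 0 ≤ ρ * f ξ := mul_nonneg hρ0.le (hf0 ξ)
            linarith [mul_comm (ρ^(1-q)) M]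
        have hconst : IntegrableOn (fun _ : EuclideanSpace ℝ (Fin N) => M * ρ^(1-q)) B volume :=
          integrableOn_const measure_closedBall_lt_top.ne
        calc (∫ ξ in B, ‖ξ‖ * f ξ) ≤ ∫ ξ in B, (ρ * f ξ + M * ρ^(1-q)) :=
              setIntegral_mono_on h1.integrableOn
                ((hfint.const_mul ρ).integrableOn.add hconst) hBmeas pt
          _ = ρ * (∫ ξ in B, f ξ) + (M * ρ^(1-q)) * (volume B).toReal := by
              rw [integral_add (hfint.const_mul ρ).integrableOn hconst, integral_const_mul,
                setIntegral_const, smul_eq_mul, measureReal_def, mul_comm ((volume B).toReal)]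
          _ ≤ ρ * n + (M * ρ^(1-q)) * (r^N * ω) := by
              have h5 : (∫ ξ in B, f ξ) ≤ n := by
                rw [hn]; exact setIntegral_le_integral hfint (ae_of_all _ hf0)
              have h6 : (volume B).toReal = r^N * ω := by
                rw [hBdef]; exact hvol 0 r hr0.le
              rw [h6]
              have := mul_le_mul_of_nonneg_left h5 hρ0.le
              linarith
      have hrout : (∫ ξ in Bᶜ, ‖ξ‖ * f ξ) ≤ r⁻¹ * (∫ ξ, ‖ξ‖^2 * f ξ) := by
        have pt : ∀ ξ ∈ Bᶜ, ‖ξ‖ * f ξ ≤ r⁻¹ * (‖ξ‖^2 * f ξ) := by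
          intro ξ hξ
          have hd : r < ‖ξ‖ := by
            simpa [hBdef, Metric.mem_closedBall, dist_eq_norm, not_le] using hξ
          rw [inv_mul_eq_div, le_div_iff₀ hr0]
          have h1' : ‖ξ‖ * r ≤ ‖ξ‖ * ‖ξ‖ := mul_le_mul_of_nonneg_left hd.le (norm_nonneg ξ)
          have h2' := mul_le_mul_of_nonneg_right h1' (hf0 ξ)
          nlinarith [h2']
        calc (∫ ξ in Bᶜ, ‖ξ‖ * f ξ) ≤ ∫ ξ in Bᶜ, r⁻¹ * (‖ξ‖^2 * f ξ) :=
              setIntegral_mono_on h1.integrableOn (h2.const_mul _).integrableOn hBmeas.compl pt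
          _ ≤ ∫ ξ, r⁻¹ * (‖ξ‖^2 * f ξ) :=
              setIntegral_le_integral (h2.const_mul _) (ae_of_all _ fun ξ =>
                mul_nonneg (inv_nonneg.2 hr0.le) (mul_nonneg (by positivity) (hf0 ξ)))
          _ = r⁻¹ * ∫ ξ, ‖ξ‖^2 * f ξ := integral_const_mul _ _
      have hsplit : (∫ ξ, ‖ξ‖ * f ξ) = (∫ ξ in B, ‖ξ‖ * f ξ) + ∫ ξ in Bᶜ, ‖ξ‖ * f ξ :=
        (integral_add_compl hBmeas h1).symm
      have htail : r⁻¹ * (∫ ξ, ‖ξ‖^2 * f ξ) ≤ n*s/4 := by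
        have h7 : r⁻¹ * (∫ ξ, ‖ξ‖^2 * f ξ) ≤ r⁻¹ * (18*(N:ℝ)*n*T) := by
          refine mul_le_mul_of_nonneg_left ?_ (inv_nonneg.2 hr0.le)
          have h8 : 2*s^2*n ≤ 16*(N:ℝ)*T*n := by nlinarith [hsmall, hn0]
          linarith [hE]
        have h9 : r⁻¹ * (18*(N:ℝ)*n*T) = n*s/4 := by
          rw [hrdef]; field_simp; ring
        linarith
      have hρn : ρ * n = n*s/4 := by rw [hρdef]; ring
      have hmain : n * s / 2 ≤ (M * ρ^(1-q)) * (r^N * ω) := by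
        linarith [hns, hrin, hrout, htail]
      -- power bookkeeping
      have e5 : s^((N:ℝ)+q) = s * s^((N:ℝ)+q-1) := by
        have h := Real.rpow_add hs 1 ((N:ℝ)+q-1)
        rw [Real.rpow_one] at h
        rw [show (1:ℝ)+((N:ℝ)+q-1) = (N:ℝ)+q from by ring] at h
        exact h
      have eρ : ρ^(1-q) = s^(1-q) * 4^(q-1) := by
        rw [hρdef, Real.div_rpow hs0 (by norm_num : (0:ℝ) ≤ 4), div_eq_mul_inv,
          ← Real.rpow_neg (by norm_num : (0:ℝ) ≤ 4), neg_sub]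
      have es : s^(1-q) * s^((N:ℝ)+q-1) = s^((N:ℝ)) := by
        rw [← Real.rpow_add hs, show (1-q)+((N:ℝ)+q-1) = (N:ℝ) by ring]
      have er : (r:ℝ)^N * s^((N:ℝ)) = (72*(N:ℝ))^((N:ℝ)) * T^((N:ℝ)) := by
        rw [← Real.rpow_natCast r N, hrdef, ← Real.mul_rpow (by positivity) hs0,
          div_mul_cancel₀ _ hs.ne', Real.mul_rpow (by positivity) hT0.le]
      have e6 : (2*((M*ρ^(1-q))*(r^N*ω))) * s^((N:ℝ)+q-1) = K₂ * M * T^((N:ℝ)) := by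
        calc (2*((M*ρ^(1-q))*(r^N*ω))) * s^((N:ℝ)+q-1)
            = 2*M*4^(q-1)*ω*((r:ℝ)^N * (s^(1-q) * s^((N:ℝ)+q-1))) := by rw [eρ]; ring
          _ = 2*M*4^(q-1)*ω*((r:ℝ)^N * s^((N:ℝ))) := by rw [es]
          _ = 2*M*4^(q-1)*ω*((72*(N:ℝ))^((N:ℝ)) * T^((N:ℝ))) := by rw [er]
          _ = K₂ * M * T^((N:ℝ)) := by rw [hK₂def]; ring
      have hA : T^((N:ℝ)) ≤ ((T + s^2) * T)^((N:ℝ)/2) := by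
        have eT : T^((N:ℝ)) = (T*T)^((N:ℝ)/2) := by
          rw [show T*T = T^2 by ring, hsqpow T hT0.le]
        rw [eT]
        exact Real.rpow_le_rpow (by positivity) (by nlinarith [sq_nonneg s]) (by positivity)
      calc n * s^((N:ℝ)+q) = (n*s) * s^((N:ℝ)+q-1) := by rw [e5]; ring
        _ ≤ (2*((M*ρ^(1-q))*(r^N*ω))) * s^((N:ℝ)+q-1) := by
            refine mul_le_mul_of_nonneg_right (by linarith) (Real.rpow_nonneg hs0 _)
        _ = K₂ * M * T^((N:ℝ)) := e6
        _ ≤ K₂ * M * (((T + s^2) * T)^((N:ℝ)/2)) := by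
            have hKM : (0:ℝ) ≤ K₂ * M := mul_nonneg hK₂.le hM0
            exact mul_le_mul_of_nonneg_left hA hKM
        _ ≤ (K₁ + K₂) * M * (((T + s^2) * T)^((N:ℝ)/2)) := by
            have h0 : (0:ℝ) ≤ M * (((T + s^2) * T)^((N:ℝ)/2)) := mul_nonneg hM0 hden.le
            calc K₂ * M * (((T + s^2) * T)^((N:ℝ)/2))
                = K₂ * (M * (((T + s^2) * T)^((N:ℝ)/2))) := by ring
              _ ≤ (K₁ + K₂) * (M * (((T + s^2) * T)^((N:ℝ)/2))) :=
                  mul_le_mul_of_nonneg_right (by linarith) h0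
              _ = (K₁ + K₂) * M * (((T + s^2) * T)^((N:ℝ)/2)) := by ring
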